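/- Fix λ ∈ ℝ^n, an index i, and Δ > 0. Let F be a continuous CDF of a probability distribution supported in [0, x̄]. Let r be any probability measure on [0, x̄]² whose second marginal has CDF F and whose first marginal has CDF F_r satisfying sup_x | F(x) − F_r(x) | ≤ Δ. Then ∫ x · Π_{j≠i} F( x̃ + λ_i − λ_j ) dr(x̃, x) − ∫ x · Π_{j≠i} F( x + λ_i − λ_j ) dF(x) ≤ x̄ Δ. -/

import Mathlib

open MeasureTheory ProbabilityTheory Real

noncomputable section

/-- CDF of a measure on `ℝ`. -/
def mcdf (μ : Measure ℝ) (x : ℝ) : ℝ := (μ (Set.Iic x)).toReal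

open Filter Topology

lemma mcdf_mono (μ : Measure ℝ) [IsFiniteMeasure μ] : Monotone (mcdf μ) := by
  intro a b hab
  exact ENNReal.toReal_mono (measure_ne_top μ _) (measure_mono (Set.Iic_subset_Iic.2 hab))

lemma mcdf_nonneg (μ : Measure ℝ) (x : ℝ) : 0 ≤ mcdf μ x := ENNReal.toReal_nonneg

lemma mcdf_le_one (μ : Measure ℝ) [IsProbabilityMeasure μ] (x : ℝ) : mcdf μ x ≤ 1 := by
  rw [mcdf, show (1:ℝ) = (1:ENNReal).toReal from rfl]
  exact ENNReal.toReal_mono (by simp) prob_le_one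

lemma ae_mem_of_prob_one {α : Type*} [MeasurableSpace α] (μ : Measure α) [IsProbabilityMeasure μ]
    {S : Set α} (hS : MeasurableSet S) (h : μ S = 1) : ∀ᵐ x ∂μ, x ∈ S := by
  rw [ae_iff]
  exact (prob_compl_eq_zero_iff hS).2 h

lemma tendsto_mcdf_Iio (μ : Measure ℝ) [IsProbabilityMeasure μ] (t : ℝ) :
    Tendsto (fun k : ℕ => mcdf μ (t - 1/(k+1))) atTop (𝓝 ((μ (Set.Iio t)).toReal)) := by
  have hU : (⋃ k : ℕ, Set.Iic (t - 1/(k+1))) = Set.Iio t := by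
    ext x
    simp only [Set.mem_iUnion, Set.mem_Iic, Set.mem_Iio]
    constructor
    · rintro ⟨k, hk⟩
      have : (0:ℝ) < 1/(k+1) := by positivity
      linarith
    · intro hx
      obtain ⟨k, hk⟩ := exists_nat_one_div_lt (show (0:ℝ) < t - x by linarith)
      exact ⟨k, by linarith⟩
  have hmono : Monotone (fun k : ℕ => Set.Iic (t - 1/(k+1))) := by
    intro a b hab
    apply Set.Iic_subset_Iic.2
    have : (1:ℝ)/(b+1) ≤ 1/(a+1) := by
      apply one_div_le_one_div_of_le (by positivity)
      have : (a:ℝ) ≤ b := Nat.cast_le.2 hab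
      linarith
    linarith
  have := tendsto_measure_iUnion_atTop (μ := μ) hmono
  rw [hU] at this
  exact (ENNReal.tendsto_toReal (measure_ne_top μ _)).comp this

lemma toReal_Ici (ν : Measure ℝ) [IsProbabilityMeasure ν] (t : ℝ) :
    (ν (Set.Ici t)).toReal = 1 - (ν (Set.Iio t)).toReal := by
  rw [← Set.compl_Iio, measure_compl measurableSet_Iio (measure_ne_top _ _), measure_univ,
    ENNReal.toReal_sub_of_le prob_le_one ENNReal.one_ne_top, ENNReal.toReal_one]

lemma swap_lemma (ν Q : Measure ℝ) [IsProbabilityMeasure ν] [IsProbabilityMeasure Q]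
    {C : ℝ} (hC : 0 ≤ C) (hQ : ∀ᵐ t ∂Q, |t| ≤ C) :
    ∫ x, (∫ t in Set.Iic x, max t 0 ∂Q) ∂ν = ∫ t, max t 0 * (ν (Set.Ici t)).toReal ∂Q := by
  have hmeas : Measurable (Function.uncurry fun x t : ℝ => if t ≤ x then max t 0 else 0) := by
    have : (Function.uncurry fun x t : ℝ => if t ≤ x then max t 0 else 0)
        = Set.indicator {p : ℝ × ℝ | p.2 ≤ p.1} (fun p => max p.2 0) := by
      ext p
      simp [Function.uncurry, Set.indicator_apply]
    rw [this]
    exact (measurable_snd.max measurable_const).indicator (measurableSet_le measurable_snd measurable_fst)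
  have haeprod : ∀ᵐ p : ℝ × ℝ ∂ν.prod Q, |p.2| ≤ C := by
    rw [ae_iff]
    have hset : {p : ℝ × ℝ | ¬ |p.2| ≤ C} = Set.univ ×ˢ {t : ℝ | ¬ |t| ≤ C} := by
      ext p; simp
    rw [hset, Measure.prod_prod]
    have : Q {t : ℝ | ¬ |t| ≤ C} = 0 := by rw [← ae_iff]; exact hQ
    simp only [not_le] at this
    simp [this]
  have hint : Integrable (Function.uncurry fun x t : ℝ => if t ≤ x then max t 0 else 0) (ν.prod Q) := by
    refine (integrable_const C).mono' hmeas.aestronglyMeasurable ?_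
    filter_upwards [haeprod] with p hp
    rw [Function.uncurry, Real.norm_eq_abs]
    split_ifs
    · rw [abs_le] at hp ⊢
      exact ⟨by simpa using Or.inl hp.1, max_le hp.2 hC⟩
    · simpa using hC
  have hK_eq : ∀ x : ℝ, ∫ t in Set.Iic x, max t 0 ∂Q = ∫ t, (if t ≤ x then max t 0 else 0) ∂Q := by
    intro x
    rw [← integral_indicator measurableSet_Iic]
    refine integral_congr_ae (Eventually.of_forall fun t => ?_)
    simp [Set.indicator_apply]
  simp_rw [hK_eq]
  rw [integral_integral_swap hint]
  congr 1
  ext t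
  have h1 : ∫ x, (if t ≤ x then max t 0 else 0) ∂ν
      = ∫ x, (Set.Ici t).indicator (fun _ => max t 0) x ∂ν := by
    refine integral_congr_ae (Eventually.of_forall fun x => ?_)
    simp [Set.indicator_apply]
  rw [h1, integral_indicator measurableSet_Ici, setIntegral_const, smul_eq_mul]
  rw [measureReal_def]
  ring

set_option maxHeartbeats 2000000 in
/-- **One-round utility gain from misreporting is at most `x̄ Δ`.**
Fix a greedy policy `λ`, an agent `i`, and `Δ > 0`.  `F` is the continuous common value
distribution on `[0,x̄]`.  If `r` is a joint law of (report, true value) on `[0,x̄]²` whose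
second marginal has CDF `F` and whose first marginal `F_r` satisfies
`sup_x |F(x) − F_r(x)| ≤ Δ`, then
`∫ x ∏_{j≠i} F(x̃ + λᵢ − λⱼ) dr(x̃,x) − ∫ x ∏_{j≠i} F(x + λᵢ − λⱼ) dF(x) ≤ x̄ Δ`. -/
theorem misreport_utility_gain_bound
    {n : ℕ} (xbar Δ : ℝ) (hΔ : 0 < Δ) (lam : Fin n → ℝ) (i : Fin n)
    (Fm Fr : Measure ℝ) [IsProbabilityMeasure Fm] [IsProbabilityMeasure Fr]
    (hFsupp : Fm (Set.Icc (0 : ℝ) xbar) = 1)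
    (hFrsupp : Fr (Set.Icc (0 : ℝ) xbar) = 1)
    (hFcont : Continuous (mcdf Fm))
    (hclose : ∀ x, |mcdf Fm x - mcdf Fr x| ≤ Δ)
    (r : Measure (ℝ × ℝ)) [IsProbabilityMeasure r]
    (hr1 : r.map Prod.fst = Fr) (hr2 : r.map Prod.snd = Fm) :
    (∫ p : ℝ × ℝ, p.2 * ∏ j ∈ Finset.univ.erase i, mcdf Fm (p.1 + lam i - lam j) ∂r) -
        (∫ x, x * ∏ j ∈ Finset.univ.erase i, mcdf Fm (x + lam i - lam j) ∂Fm) ≤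
      xbar * Δ := by
  classical
  have hxbar : 0 ≤ xbar := by
    by_contra h
    push_neg at h
    rw [Set.Icc_eq_empty (by linarith)] at hFsupp
    simp at hFsupp
  rcases Finset.eq_empty_or_nonempty (Finset.univ.erase i) with hE | hE
  · simp only [hE, Finset.prod_empty, mul_one]
    have h2 : ∫ p : ℝ × ℝ, p.2 ∂r = ∫ x, x ∂Fm := by
      rw [← hr2]
      exact (integral_map measurable_snd.aemeasurable aestronglyMeasurable_id).symm
    rw [h2, sub_self]
    positivity
  -- main case
  obtain ⟨j₀, hj₀⟩ := hE
  haveI hne : Nonempty {j // j ∈ Finset.univ.erase i} := ⟨⟨j₀, hj₀⟩⟩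
  set ι := {j // j ∈ Finset.univ.erase i}
  set P : Measure (ι → ℝ) := Measure.pi (fun _ => Fm) with hPdef
  set M : (ι → ℝ) → ℝ :=
    fun z => Finset.univ.sup' Finset.univ_nonempty (fun j : ι => z j - lam i + lam j.1) with hMdef
  have hMmeas : Measurable M := by
    have hM2 : M = Finset.univ.sup' Finset.univ_nonempty
        (fun (j : ι) (z : ι → ℝ) => z j - lam i + lam j.1) := by
      ext z
      rw [Finset.sup'_apply]
    rw [hM2]
    exact Finset.measurable_sup' _
      (fun j _ => ((measurable_pi_apply j).sub measurable_const).add measurable_const)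
  set Q : Measure ℝ := P.map M with hQdef
  haveI hQprob : IsProbabilityMeasure Q := Measure.isProbabilityMeasure_map hMmeas.aemeasurable
  have hG : ∀ x : ℝ, mcdf Q x = ∏ j ∈ Finset.univ.erase i, mcdf Fm (x + lam i - lam j) := by
    intro x
    have hpre : M ⁻¹' (Set.Iic x)
        = Set.univ.pi (fun j : ι => Set.Iic (x + lam i - lam j.1)) := by
      ext z
      simp only [Set.mem_preimage, Set.mem_Iic, Set.mem_pi, Set.mem_univ, true_implies, hMdef,
        Finset.sup'_le_iff, Finset.mem_univ, forall_true_left]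
      constructor
      · intro h j
        have := h j
        linarith
      · intro h j
        have := h j
        linarith
    rw [mcdf, hQdef, Measure.map_apply hMmeas measurableSet_Iic, hpre, hPdef, Measure.pi_pi,
      ENNReal.toReal_prod]
    rw [Finset.univ_eq_attach, Finset.prod_attach (Finset.univ.erase i)
      (fun j => (Fm (Set.Iic (x + lam i - lam j))).toReal)]
    rfl
  set B : ℝ := ∑ j : Fin n, |lam i - lam j| with hBdef
  have hBnn : 0 ≤ B := Finset.sum_nonneg (fun j _ => abs_nonneg _)
  have hBj : ∀ j : Fin n, |lam i - lam j| ≤ B :=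
    fun j => Finset.single_le_sum (fun k _ => abs_nonneg (lam i - lam k)) (Finset.mem_univ j)
  set C : ℝ := xbar + B with hCdef
  have hC : 0 ≤ C := by linarith
  have hQsupp : ∀ᵐ t ∂Q, |t| ≤ C := by
    rw [hQdef, ae_map_iff hMmeas.aemeasurable
      (measurableSet_le (measurable_abs) measurable_const : MeasurableSet {t : ℝ | |t| ≤ C})]
    have hS : P (Set.univ.pi (fun _ : ι => Set.Icc (0:ℝ) xbar)) = 1 := by
      rw [hPdef, Measure.pi_pi]
      simp [hFsupp]
    filter_upwards [ae_mem_of_prob_one P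
      (MeasurableSet.univ_pi (fun _ => measurableSet_Icc)) hS] with z hz
    have hzj : ∀ j : ι, z j ∈ Set.Icc (0:ℝ) xbar := fun j => hz j (Set.mem_univ j)
    have hub : M z ≤ C := by
      simp only [hMdef]
      apply Finset.sup'_le
      intro j _
      have h1 := (hzj j).2
      have h2 : lam j.1 - lam i ≤ |lam i - lam j.1| := by
        rw [abs_sub_comm]
        exact le_abs_self _
      have := hBj j.1
      simp only [hCdef]
      linarith
    have hlb : -C ≤ M z := by
      obtain ⟨j⟩ := hne
      have h1 : z j - lam i + lam j.1 ≤ M z := by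
        simp only [hMdef]
        exact Finset.le_sup' (fun j : ι => z j - lam i + lam j.1) (Finset.mem_univ j)
      have h2 : -(|lam i - lam j.1|) ≤ -(lam i - lam j.1) := neg_le_neg (le_abs_self _)
      have h3 := (hzj j).1
      have := hBj j.1
      simp only [hCdef]
      linarith
    exact abs_le.mpr ⟨hlb, hub⟩
  -- the auxiliary function K
  set K : ℝ → ℝ := fun x => ∫ t in Set.Iic x, max t 0 ∂Q with hKdef
  have hQint : Integrable (fun t : ℝ => max t 0) Q := by
    refine (integrable_const C).mono'
      ((measurable_id.max measurable_const).aestronglyMeasurable) ?_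
    filter_upwards [hQsupp] with t ht
    rw [Real.norm_eq_abs, abs_of_nonneg (le_max_right t 0)]
    exact max_le (le_trans (le_abs_self t) ht) hC
  have hKdiff : ∀ a b : ℝ, a ≤ b → K b = K a + ∫ t in Set.Ioc a b, max t 0 ∂Q := by
    intro a b hab
    rw [hKdef]
    rw [← setIntegral_union (Set.Iic_disjoint_Ioc le_rfl) measurableSet_Ioc
      hQint.integrableOn hQint.integrableOn, Set.Iic_union_Ioc_eq_Iic hab]
  have hKmono : Monotone K := by
    intro a b hab
    rw [hKdiff a b hab, le_add_iff_nonneg_right]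
    apply setIntegral_nonneg measurableSet_Ioc
    intro t _
    exact le_max_right t 0
  have hKbd : ∀ x, |K x| ≤ C := by
    intro x
    rw [hKdef]
    calc |∫ t in Set.Iic x, max t 0 ∂Q| ≤ ∫ t in Set.Iic x, |max t 0| ∂Q := by
          simpa [Real.norm_eq_abs] using
            norm_integral_le_integral_norm (μ := Q.restrict (Set.Iic x)) (fun t : ℝ => max t 0)
      _ ≤ ∫ t in Set.Iic x, C ∂Q := by
          refine setIntegral_mono_ae_restrict hQint.abs.integrableOn
            (integrableOn_const (measure_ne_top _ _) enorm_ne_top)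
            (ae_restrict_of_ae ?_)
          filter_upwards [hQsupp] with t ht
          rw [abs_of_nonneg (le_max_right t 0)]
          exact max_le (le_trans (le_abs_self t) ht) hC
      _ = (Q (Set.Iic x)).toReal * C := by rw [setIntegral_const, smul_eq_mul, measureReal_def]
      _ ≤ 1 * C := by
          apply mul_le_mul_of_nonneg_right _ hC
          simpa using ENNReal.toReal_mono ENNReal.one_ne_top prob_le_one
      _ = C := one_mul C
  have hmcdfQdiff : ∀ a b : ℝ, a ≤ b → mcdf Q b = mcdf Q a + (Q (Set.Ioc a b)).toReal := by
    intro a b hab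
    rw [mcdf, mcdf, ← ENNReal.toReal_add (measure_ne_top _ _) (measure_ne_top _ _),
      ← measure_union (Set.Iic_disjoint_Ioc le_rfl) measurableSet_Ioc,
      Set.Iic_union_Ioc_eq_Iic hab]
  have hkey : ∀ a y : ℝ, 0 ≤ y → y * mcdf Q a ≤ y * mcdf Q y + (K a - K y) := by
    intro a y hy
    rcases le_total y a with h | h
    · have h1 := hKdiff y a h
      have h2 := hmcdfQdiff y a h
      have h3 : y * (Q (Set.Ioc y a)).toReal ≤ ∫ t in Set.Ioc y a, max t 0 ∂Q := by
        have h4 : ∫ t in Set.Ioc y a, (y : ℝ) ∂Q ≤ ∫ t in Set.Ioc y a, max t 0 ∂Q := by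
          apply setIntegral_mono_on (integrableOn_const (measure_ne_top _ _) enorm_ne_top)
            hQint.integrableOn measurableSet_Ioc
          intro t ht
          exact le_trans (le_of_lt ht.1) (le_max_left t 0)
        rwa [setIntegral_const, smul_eq_mul, measureReal_def, mul_comm] at h4
      rw [h1, h2]
      nlinarith [h3]
    · have h1 := hKdiff a y h
      have h2 := hmcdfQdiff a y h
      have h3 : ∫ t in Set.Ioc a y, max t 0 ∂Q ≤ y * (Q (Set.Ioc a y)).toReal := by
        have h4 : ∫ t in Set.Ioc a y, max t 0 ∂Q ≤ ∫ t in Set.Ioc a y, (y : ℝ) ∂Q := by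
          apply setIntegral_mono_on hQint.integrableOn
            (integrableOn_const (measure_ne_top _ _) enorm_ne_top) measurableSet_Ioc
          intro t ht
          exact max_le ht.2 hy
        rwa [setIntegral_const, smul_eq_mul, measureReal_def, mul_comm] at h4
      rw [h1, h2]
      nlinarith [h3]
  have hae2 : ∀ᵐ p : ℝ × ℝ ∂r, p.2 ∈ Set.Icc (0:ℝ) xbar := by
    have h1 : r (Prod.snd ⁻¹' Set.Icc (0:ℝ) xbar) = 1 := by
      rw [← Measure.map_apply measurable_snd measurableSet_Icc, hr2]
      exact hFsupp
    filter_upwards [ae_mem_of_prob_one r (measurable_snd measurableSet_Icc) h1] with p hp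
    exact hp
  have hQm : Measurable (mcdf Q) := (mcdf_mono Q).measurable
  have hKm : Measurable K := hKmono.measurable
  have hint1 : Integrable (fun p : ℝ × ℝ => p.2 * mcdf Q p.1) r := by
    refine (integrable_const xbar).mono'
      ((measurable_snd.mul (hQm.comp measurable_fst)).aestronglyMeasurable) ?_
    filter_upwards [hae2] with p hp
    rw [Real.norm_eq_abs, abs_mul]
    have h1 : |p.2| ≤ xbar := abs_le.2 ⟨by linarith [hp.1], hp.2⟩
    have h2 : |mcdf Q p.1| ≤ 1 := abs_le.2 ⟨by linarith [mcdf_nonneg Q p.1], mcdf_le_one Q p.1⟩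
    calc |p.2| * |mcdf Q p.1| ≤ xbar * 1 := mul_le_mul h1 h2 (abs_nonneg _) hxbar
      _ = xbar := mul_one xbar
  have hint2 : Integrable (fun p : ℝ × ℝ => p.2 * mcdf Q p.2) r := by
    refine (integrable_const xbar).mono'
      ((measurable_snd.mul (hQm.comp measurable_snd)).aestronglyMeasurable) ?_
    filter_upwards [hae2] with p hp
    rw [Real.norm_eq_abs, abs_mul]
    have h1 : |p.2| ≤ xbar := abs_le.2 ⟨by linarith [hp.1], hp.2⟩
    have h2 : |mcdf Q p.2| ≤ 1 := abs_le.2 ⟨by linarith [mcdf_nonneg Q p.2], mcdf_le_one Q p.2⟩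
    calc |p.2| * |mcdf Q p.2| ≤ xbar * 1 := mul_le_mul h1 h2 (abs_nonneg _) hxbar
      _ = xbar := mul_one xbar
  have hint3 : Integrable (fun p : ℝ × ℝ => K p.1) r := by
    refine (integrable_const C).mono' ((hKm.comp measurable_fst).aestronglyMeasurable) ?_
    exact Eventually.of_forall (fun p => by rw [Real.norm_eq_abs]; exact hKbd p.1)
  have hint4 : Integrable (fun p : ℝ × ℝ => K p.2) r := by
    refine (integrable_const C).mono' ((hKm.comp measurable_snd).aestronglyMeasurable) ?_
    exact Eventually.of_forall (fun p => by rw [Real.norm_eq_abs]; exact hKbd p.2)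
  have hint34 : Integrable (fun p : ℝ × ℝ => K p.1 - K p.2) r := hint3.sub hint4
  have step1 : ∫ p : ℝ × ℝ, p.2 * mcdf Q p.1 ∂r
      ≤ ∫ p : ℝ × ℝ, (p.2 * mcdf Q p.2 + (K p.1 - K p.2)) ∂r := by
    refine integral_mono_ae hint1 (hint2.add hint34) ?_
    filter_upwards [hae2] with p hp
    exact hkey p.1 p.2 hp.1
  have E1 : ∫ p : ℝ × ℝ, p.2 * mcdf Q p.2 ∂r = ∫ x, x * mcdf Q x ∂Fm := by
    rw [← hr2]
    exact (integral_map measurable_snd.aemeasurable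
      ((measurable_id.mul hQm).aestronglyMeasurable)).symm
  have E2 : ∫ p : ℝ × ℝ, K p.1 ∂r = ∫ x, K x ∂Fr := by
    rw [← hr1]
    exact (integral_map measurable_fst.aemeasurable hKm.aestronglyMeasurable).symm
  have E3 : ∫ p : ℝ × ℝ, K p.2 ∂r = ∫ x, K x ∂Fm := by
    rw [← hr2]
    exact (integral_map measurable_snd.aemeasurable hKm.aestronglyMeasurable).symm
  -- pointwise bound for step 4
  have hpt : ∀ t : ℝ, max t 0 * ((Fr (Set.Ici t)).toReal - (Fm (Set.Ici t)).toReal)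
      ≤ xbar * Δ := by
    intro t
    rcases le_or_gt t xbar with h | h
    · have hseq : Tendsto (fun k : ℕ => t - 1/(k+1)) atTop (𝓝 t) := by
        have h0 := tendsto_one_div_add_atTop_nhds_zero_nat (𝕜 := ℝ)
        have h2 := (tendsto_const_nhds (x := t) (f := (atTop : Filter ℕ))).sub h0
        simpa using h2
      have hFmIio : (Fm (Set.Iio t)).toReal = mcdf Fm t :=
        tendsto_nhds_unique (tendsto_mcdf_Iio Fm t) ((hFcont.tendsto t).comp hseq)
      have hFrIio : mcdf Fm t - Δ ≤ (Fr (Set.Iio t)).toReal := by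
        refine le_of_tendsto_of_tendsto'
          (f := fun k : ℕ => mcdf Fm (t - 1/(k+1)) - Δ)
          (((hFcont.tendsto t).comp hseq).sub tendsto_const_nhds)
          (tendsto_mcdf_Iio Fr t) ?_
        intro k
        have hk := abs_le.1 (hclose (t - 1/(k+1)))
        linarith [hk.1]
      have hdiff : (Fr (Set.Ici t)).toReal - (Fm (Set.Ici t)).toReal ≤ Δ := by
        rw [toReal_Ici Fr t, toReal_Ici Fm t]
        linarith [hFmIio, hFrIio]
      rcases le_or_gt ((Fr (Set.Ici t)).toReal - (Fm (Set.Ici t)).toReal) 0 with hd | hd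
      · have hle0 := mul_nonpos_of_nonneg_of_nonpos (le_max_right t 0) hd
        have : (0:ℝ) ≤ xbar * Δ := by positivity
        linarith
      · exact mul_le_mul (max_le h hxbar) hdiff hd.le hxbar
    · have hcompl : Set.Ici t ⊆ (Set.Icc (0:ℝ) xbar)ᶜ := by
        intro x hx
        simp only [Set.mem_compl_iff, Set.mem_Icc, not_and, not_le]
        intro _
        have := Set.mem_Ici.1 hx
        linarith
      have hM0 : Fm (Set.Ici t) = 0 :=
        measure_mono_null hcompl ((prob_compl_eq_zero_iff measurableSet_Icc).2 hFsupp)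
      have hR0 : Fr (Set.Ici t) = 0 :=
        measure_mono_null hcompl ((prob_compl_eq_zero_iff measurableSet_Icc).2 hFrsupp)
      rw [hM0, hR0]
      simp
      positivity
  have hAntiR : Measurable (fun t : ℝ => (Fr (Set.Ici t)).toReal) := by
    apply Antitone.measurable
    intro a b hab
    exact ENNReal.toReal_mono (measure_ne_top _ _) (measure_mono (Set.Ici_subset_Ici.2 hab))
  have hAntiM : Measurable (fun t : ℝ => (Fm (Set.Ici t)).toReal) := by
    apply Antitone.measurable
    intro a b hab
    exact ENNReal.toReal_mono (measure_ne_top _ _) (measure_mono (Set.Ici_subset_Ici.2 hab))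
  have hintQR : Integrable (fun t : ℝ => max t 0 * (Fr (Set.Ici t)).toReal) Q := by
    refine (integrable_const C).mono'
      (((measurable_id.max measurable_const).mul hAntiR).aestronglyMeasurable) ?_
    filter_upwards [hQsupp] with t ht
    rw [Real.norm_eq_abs, abs_mul]
    have h1 : |max t 0| ≤ C := by
      rw [abs_of_nonneg (le_max_right t 0)]
      exact max_le (le_trans (le_abs_self t) ht) hC
    have h2 : |(Fr (Set.Ici t)).toReal| ≤ 1 := by
      rw [abs_of_nonneg ENNReal.toReal_nonneg]
      simpa using ENNReal.toReal_mono ENNReal.one_ne_top prob_le_one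
    calc |max t 0| * |(Fr (Set.Ici t)).toReal| ≤ C * 1 :=
          mul_le_mul h1 h2 (abs_nonneg _) hC
      _ = C := mul_one C
  have hintQM : Integrable (fun t : ℝ => max t 0 * (Fm (Set.Ici t)).toReal) Q := by
    refine (integrable_const C).mono'
      (((measurable_id.max measurable_const).mul hAntiM).aestronglyMeasurable) ?_
    filter_upwards [hQsupp] with t ht
    rw [Real.norm_eq_abs, abs_mul]
    have h1 : |max t 0| ≤ C := by
      rw [abs_of_nonneg (le_max_right t 0)]
      exact max_le (le_trans (le_abs_self t) ht) hC
    have h2 : |(Fm (Set.Ici t)).toReal| ≤ 1 := by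
      rw [abs_of_nonneg ENNReal.toReal_nonneg]
      simpa using ENNReal.toReal_mono ENNReal.one_ne_top prob_le_one
    calc |max t 0| * |(Fm (Set.Ici t)).toReal| ≤ C * 1 :=
          mul_le_mul h1 h2 (abs_nonneg _) hC
      _ = C := mul_one C
  have step4 : (∫ x, K x ∂Fr) - (∫ x, K x ∂Fm) ≤ xbar * Δ := by
    have hswapR : ∫ x, K x ∂Fr = ∫ t, max t 0 * (Fr (Set.Ici t)).toReal ∂Q := by
      rw [hKdef]
      exact swap_lemma Fr Q hC hQsupp
    have hswapM : ∫ x, K x ∂Fm = ∫ t, max t 0 * (Fm (Set.Ici t)).toReal ∂Q := by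
      rw [hKdef]
      exact swap_lemma Fm Q hC hQsupp
    rw [hswapR, hswapM, ← integral_sub hintQR hintQM]
    calc ∫ t, (max t 0 * (Fr (Set.Ici t)).toReal - max t 0 * (Fm (Set.Ici t)).toReal) ∂Q
        ≤ ∫ _t, xbar * Δ ∂Q := by
          refine integral_mono (hintQR.sub hintQM) (integrable_const _) ?_
          intro t
          simp only [← mul_sub]
          exact hpt t
      _ = xbar * Δ := by
          rw [integral_const]
          simp
  simp_rw [← hG]
  have hfinal : ∫ p : ℝ × ℝ, p.2 * mcdf Q p.1 ∂r
      ≤ (∫ x, x * mcdf Q x ∂Fm) + ((∫ x, K x ∂Fr) - ∫ x, K x ∂Fm) := by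
    calc ∫ p : ℝ × ℝ, p.2 * mcdf Q p.1 ∂r
        ≤ ∫ p : ℝ × ℝ, (p.2 * mcdf Q p.2 + (K p.1 - K p.2)) ∂r := step1
      _ = (∫ p : ℝ × ℝ, p.2 * mcdf Q p.2 ∂r)
            + ((∫ p : ℝ × ℝ, K p.1 ∂r) - ∫ p : ℝ × ℝ, K p.2 ∂r) := by
          rw [integral_add hint2 hint34, integral_sub hint3 hint4]
      _ = _ := by rw [E1, E2, E3]
  linarith [hfinal, step4]
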